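/- arXiv:2304.04221 — 3 statements merged into one kernel-verified Lean document; each statement's English description precedes it below -/
import Mathlib

section
/- Let {(X_i,Y_i)}_{i≥1} be i.i.d. copies of a random vector (X,Y) with X ∈ ℝ^p a random row vector and Y ∈ ℝ, having finite fourth moments, covariance matrix Σ_XX of X positive definite, Σ_XY ≠ 0, and σ_Y² = Var(Y) > 0; let γ = √(Σ_YX Σ_XX⁻¹ Σ_XY)/σ_Y and Ỹ*(x₀) = μ_Y + (x₀−μ_X)·(1/γ)Σ_XX⁻¹Σ_XY. Then for each fixed x₀ ∈ ℝ^p, the estimated maximum agreement linear predictor Ŷₙ*(x₀) converges in probability to Ỹ*(x₀) as n → ∞. -/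
open MeasureTheory ProbabilityTheory Matrix Filter Topology

/-- Sample mean of the covariate vectors among the first `n` observations. -/
noncomputable def sampleXbar {Ω : Type*} {p : ℕ} (X : ℕ → Ω → Fin p → ℝ) (n : ℕ) (ω : Ω) :
    Fin p → ℝ :=
  (n : ℝ)⁻¹ • ∑ i ∈ Finset.range n, X i ω

/-- Sample mean of the responses among the first `n` observations. -/
noncomputable def sampleYbar {Ω : Type*} (Y : ℕ → Ω → ℝ) (n : ℕ) (ω : Ω) : ℝ :=
  (n : ℝ)⁻¹ * ∑ i ∈ Finset.range n, Y i ω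

/-- Sample covariance matrix `S_XX` of the covariates. -/
noncomputable def sampleSXX {Ω : Type*} {p : ℕ} (X : ℕ → Ω → Fin p → ℝ) (n : ℕ) (ω : Ω) :
    Matrix (Fin p) (Fin p) ℝ :=
  ((n : ℝ) - 1)⁻¹ • ∑ i ∈ Finset.range n,
    vecMulVec (X i ω - sampleXbar X n ω) (X i ω - sampleXbar X n ω)

/-- Sample covariance vector `S_XY` between covariates and response. -/
noncomputable def sampleSXY {Ω : Type*} {p : ℕ} (X : ℕ → Ω → Fin p → ℝ) (Y : ℕ → Ω → ℝ)
    (n : ℕ) (ω : Ω) : Fin p → ℝ :=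
  ((n : ℝ) - 1)⁻¹ • ∑ i ∈ Finset.range n, (Y i ω - sampleYbar Y n ω) • (X i ω - sampleXbar X n ω)

/-- Sample variance `S_Y²` of the response. -/
noncomputable def sampleSY2 {Ω : Type*} (Y : ℕ → Ω → ℝ) (n : ℕ) (ω : Ω) : ℝ :=
  ((n : ℝ) - 1)⁻¹ * ∑ i ∈ Finset.range n, (Y i ω - sampleYbar Y n ω) ^ 2

/-- Sample multiple correlation coefficient `γ̂ₙ = √(S_YX S_XX⁻¹ S_XY)/S_Y`. -/
noncomputable def sampleGamma {Ω : Type*} {p : ℕ} (X : ℕ → Ω → Fin p → ℝ) (Y : ℕ → Ω → ℝ)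
    (n : ℕ) (ω : Ω) : ℝ :=
  Real.sqrt (sampleSXY X Y n ω ⬝ᵥ ((sampleSXX X n ω)⁻¹ *ᵥ sampleSXY X Y n ω)) /
    Real.sqrt (sampleSY2 Y n ω)

/-- Estimated maximum agreement linear predictor
`Ŷₙ*(x₀) = Ȳ + (x₀ − X̄)·(1/γ̂ₙ) S_XX⁻¹ S_XY`. -/
noncomputable def malpHat {Ω : Type*} {p : ℕ} (X : ℕ → Ω → Fin p → ℝ) (Y : ℕ → Ω → ℝ)
    (n : ℕ) (x₀ : Fin p → ℝ) (ω : Ω) : ℝ :=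
  sampleYbar Y n ω + (x₀ - sampleXbar X n ω) ⬝ᵥ
    ((sampleGamma X Y n ω)⁻¹ • ((sampleSXX X n ω)⁻¹ *ᵥ sampleSXY X Y n ω))

/-- Estimated least-squares linear predictor `Ŷₙ†(x₀) = Ȳ + (x₀ − X̄)·S_XX⁻¹ S_XY`. -/
noncomputable def lslpHat {Ω : Type*} {p : ℕ} (X : ℕ → Ω → Fin p → ℝ) (Y : ℕ → Ω → ℝ)
    (n : ℕ) (x₀ : Fin p → ℝ) (ω : Ω) : ℝ :=
  sampleYbar Y n ω + (x₀ - sampleXbar X n ω) ⬝ᵥ ((sampleSXX X n ω)⁻¹ *ᵥ sampleSXY X Y n ω)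

/-- Expectation of a real random variable with respect to the ambient measure. -/
noncomputable def pMean {Ω : Type*} [MeasureSpace Ω] (U : Ω → ℝ) : ℝ := ∫ ω, U ω

/-- Covariance of two real random variables. -/
noncomputable def pCov {Ω : Type*} [MeasureSpace Ω] (U V : Ω → ℝ) : ℝ :=
  ∫ ω, (U ω - pMean U) * (V ω - pMean V)

/-- Variance of a real random variable. -/
noncomputable def pVar {Ω : Type*} [MeasureSpace Ω] (U : Ω → ℝ) : ℝ := pCov U U

section Aux

lemma centered_sum (n : ℕ) (a b : ℕ → ℝ) :
    ∑ i ∈ Finset.range n, (a i - (n:ℝ)⁻¹ * ∑ k ∈ Finset.range n, a k) *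
      (b i - (n:ℝ)⁻¹ * ∑ k ∈ Finset.range n, b k)
    = (∑ i ∈ Finset.range n, a i * b i)
      - (n:ℝ) * ((n:ℝ)⁻¹ * ∑ k ∈ Finset.range n, a k) * ((n:ℝ)⁻¹ * ∑ k ∈ Finset.range n, b k) := by
  rcases Nat.eq_zero_or_pos n with h | h
  · simp [h]
  have hn : (n:ℝ) ≠ 0 := Nat.cast_ne_zero.2 h.ne'
  set A := (n:ℝ)⁻¹ * ∑ k ∈ Finset.range n, a k with hA
  set B := (n:ℝ)⁻¹ * ∑ k ∈ Finset.range n, b k with hB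
  have hsa : ∑ k ∈ Finset.range n, a k = (n:ℝ) * A := by rw [hA, mul_inv_cancel_left₀ hn]
  have hsb : ∑ k ∈ Finset.range n, b k = (n:ℝ) * B := by rw [hB, mul_inv_cancel_left₀ hn]
  have : ∀ i, (a i - A) * (b i - B) = a i * b i - A * b i - B * a i + A * B := fun i => by ring
  rw [Finset.sum_congr rfl fun i _ => this i]
  rw [Finset.sum_add_distrib, Finset.sum_sub_distrib, Finset.sum_sub_distrib,
    ← Finset.mul_sum, ← Finset.mul_sum, hsa, hsb, Finset.sum_const, Finset.card_range,
    nsmul_eq_mul]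
  ring

lemma tendsto_ratio : Tendsto (fun n : ℕ => ((n:ℝ) - 1)⁻¹ * n) atTop (𝓝 1) := by
  have h0 : Tendsto (fun n : ℕ => 1 - ((n:ℝ))⁻¹) atTop (𝓝 1) := by
    simpa using tendsto_const_nhds.sub (tendsto_inv_atTop_nhds_zero_nat : Tendsto (fun n : ℕ => ((n:ℝ))⁻¹) atTop (𝓝 0))
  have h1 : Tendsto (fun n : ℕ => (1 - ((n:ℝ))⁻¹)⁻¹) atTop (𝓝 1) := by
    simpa using h0.inv₀ one_ne_zero
  refine h1.congr' ?_
  filter_upwards [eventually_ge_atTop 1] with n hn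
  have hn0 : (n:ℝ) ≠ 0 := by positivity
  rw [inv_eq_iff_eq_inv, mul_inv, inv_inv]
  field_simp

lemma slln_comp {Ω : Type*} [MeasureSpace Ω] [IsProbabilityMeasure (ℙ : Measure Ω)] {p : ℕ}
    (X : ℕ → Ω → Fin p → ℝ) (Y : ℕ → Ω → ℝ)
    (hXm : ∀ i, Measurable (X i)) (hYm : ∀ i, Measurable (Y i))
    (hindep : iIndepFun (fun i ω => (X i ω, Y i ω)) ℙ)
    (hid : ∀ i, Measure.map (fun ω => (X i ω, Y i ω)) ℙ
      = Measure.map (fun ω => (X 0 ω, Y 0 ω)) ℙ)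
    (g : (Fin p → ℝ) × ℝ → ℝ) (hg : Measurable g)
    (hint : Integrable (fun ω => g (X 0 ω, Y 0 ω)) ℙ) :
    ∀ᵐ ω, Tendsto (fun n : ℕ => (n:ℝ)⁻¹ * ∑ i ∈ Finset.range n, g (X i ω, Y i ω)) atTop
      (𝓝 (∫ ω, g (X 0 ω, Y 0 ω))) := by
  have hZm : ∀ i, Measurable fun ω => (X i ω, Y i ω) := fun i => (hXm i).prodMk (hYm i)
  have hident : ∀ i,
      IdentDistrib (fun ω => g (X i ω, Y i ω)) (fun ω => g (X 0 ω, Y 0 ω)) ℙ ℙ :=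
    fun i => IdentDistrib.comp ⟨(hZm i).aemeasurable, (hZm 0).aemeasurable, hid i⟩ hg
  have hpi : Pairwise (Function.onFun (IndepFun · · ℙ) fun i ω => g (X i ω, Y i ω)) :=
    fun i j hij => (hindep.indepFun hij).comp hg hg
  have h := strong_law_ae (fun i ω => g (X i ω, Y i ω)) hint hpi hident
  filter_upwards [h] with ω hω
  simpa [smul_eq_mul] using hω

lemma mul_int' {Ω : Type*} [MeasureSpace Ω] [IsProbabilityMeasure (ℙ : Measure Ω)]
    {U V : Ω → ℝ} (hU : MemLp U 2 ℙ) (hV : MemLp V 2 ℙ) :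
    Integrable (fun ω => U ω * V ω) ℙ := by
  have h : MemLp (U • V) 1 ℙ := MemLp.smul (r := 1) hV hU
  exact (show Integrable (U * V) ℙ by simpa [Pi.smul_apply, smul_eq_mul] using h.integrable le_rfl)

lemma pCov_eq {Ω : Type*} [MeasureSpace Ω] [IsProbabilityMeasure (ℙ : Measure Ω)]
    {U V : Ω → ℝ} (hU : MemLp U 2 ℙ) (hV : MemLp V 2 ℙ) :
    (∫ ω, U ω * V ω) = pCov U V + pMean U * pMean V := by
  have hUi : Integrable U ℙ := hU.integrable (by norm_num)
  have hVi : Integrable V ℙ := hV.integrable (by norm_num)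
  have hUV : Integrable (fun ω => U ω * V ω) ℙ := mul_int' hU hV
  set a := pMean U with ha
  set b := pMean V with hb
  have h1 : ∀ ω, (U ω - a) * (V ω - b) = U ω * V ω - (a * V ω + b * U ω - a * b) :=
    fun ω => by ring
  have h2 : pCov U V = (∫ ω, U ω * V ω) - (a * b + b * a - a * b) := by
    rw [pCov]
    calc (∫ ω, (U ω - a) * (V ω - b))
        = ∫ ω, (U ω * V ω - (a * V ω + b * U ω - a * b)) := by
          exact integral_congr_ae (Filter.Eventually.of_forall fun ω => h1 ω)
      _ = (∫ ω, U ω * V ω) - ∫ ω, (a * V ω + b * U ω - a * b) := by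
          have e2 : Integrable (fun ω => a * V ω + b * U ω - a * b) ℙ := by
            exact ((hVi.const_mul a).add (hUi.const_mul b)).sub (integrable_const _)
          exact integral_sub hUV e2
      _ = (∫ ω, U ω * V ω) - (a * b + b * a - a * b) := by
          have e1 : Integrable (fun ω => a * V ω + b * U ω) ℙ := by
            exact (hVi.const_mul a).add (hUi.const_mul b)
          rw [integral_sub e1 (integrable_const _),
            integral_add (hVi.const_mul a) (hUi.const_mul b), integral_const_mul,
            integral_const_mul, integral_const, probReal_univ]
          have hbv : ∫ ω, V ω = b := rfl
          have hau : ∫ ω, U ω = a := rfl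
          rw [hbv, hau]
          simp
  rw [h2]; ring

lemma sampleXbar_apply {Ω : Type*} {p : ℕ} (X : ℕ → Ω → Fin p → ℝ) (n : ℕ) (ω : Ω) (j : Fin p) :
    sampleXbar X n ω j = (n:ℝ)⁻¹ * ∑ i ∈ Finset.range n, X i ω j := by
  simp [sampleXbar, Finset.sum_apply]

lemma tendsto_malpHat_det {Ω : Type*} {p : ℕ} (X : ℕ → Ω → Fin p → ℝ) (Y : ℕ → Ω → ℝ) (ω : Ω)
    (μX : Fin p → ℝ) (μY : ℝ) (SigXX : Matrix (Fin p) (Fin p) ℝ) (SigXY : Fin p → ℝ) (vY : ℝ)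
    (hdet : SigXX.det ≠ 0)
    (hq : 0 < SigXY ⬝ᵥ (SigXX⁻¹ *ᵥ SigXY)) (hvY : 0 < vY) (x₀ : Fin p → ℝ)
    (hxbar : ∀ j, Tendsto (fun n : ℕ => (n:ℝ)⁻¹ * ∑ i ∈ Finset.range n, X i ω j) atTop
      (𝓝 (μX j)))
    (hybar : Tendsto (fun n : ℕ => (n:ℝ)⁻¹ * ∑ i ∈ Finset.range n, Y i ω) atTop (𝓝 μY))
    (hxx : ∀ j l, Tendsto (fun n : ℕ => (n:ℝ)⁻¹ * ∑ i ∈ Finset.range n, X i ω j * X i ω l) atTop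
      (𝓝 (SigXX j l + μX j * μX l)))
    (hxy : ∀ j, Tendsto (fun n : ℕ => (n:ℝ)⁻¹ * ∑ i ∈ Finset.range n, Y i ω * X i ω j) atTop
      (𝓝 (SigXY j + μY * μX j)))
    (hyy : Tendsto (fun n : ℕ => (n:ℝ)⁻¹ * ∑ i ∈ Finset.range n, Y i ω * Y i ω) atTop
      (𝓝 (vY + μY * μY))) :
    Tendsto (fun n => malpHat X Y n x₀ ω) atTop
      (𝓝 (μY + (x₀ - μX) ⬝ᵥ ((Real.sqrt (SigXY ⬝ᵥ (SigXX⁻¹ *ᵥ SigXY)) / Real.sqrt vY)⁻¹ •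
        (SigXX⁻¹ *ᵥ SigXY)))) := by
  have hXbar' : ∀ j, Tendsto (fun n => sampleXbar X n ω j) atTop (𝓝 (μX j)) := by
    intro j
    simpa [sampleXbar_apply] using hxbar j
  have hYbar' : Tendsto (fun n => sampleYbar Y n ω) atTop (𝓝 μY) := by
    simpa [sampleYbar] using hybar
  -- S_XX convergence
  have hSXXjl : ∀ j l, Tendsto (fun n => sampleSXX X n ω j l) atTop (𝓝 (SigXX j l)) := by
    intro j l
    have base : Tendsto (fun n : ℕ => (((n:ℝ) - 1)⁻¹ * n) *
        (((n:ℝ)⁻¹ * ∑ i ∈ Finset.range n, X i ω j * X i ω l) -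
          sampleXbar X n ω j * sampleXbar X n ω l)) atTop
        (𝓝 (1 * ((SigXX j l + μX j * μX l) - μX j * μX l))) :=
      tendsto_ratio.mul ((hxx j l).sub ((hXbar' j).mul (hXbar' l)))
    have ev : ∀ᶠ n : ℕ in atTop, (((n:ℝ) - 1)⁻¹ * n) *
        (((n:ℝ)⁻¹ * ∑ i ∈ Finset.range n, X i ω j * X i ω l) -
          sampleXbar X n ω j * sampleXbar X n ω l) = sampleSXX X n ω j l := by
      filter_upwards [eventually_ge_atTop 1] with n hn
      have hn0 : (n:ℝ) ≠ 0 := by positivity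
      have key : sampleSXX X n ω j l = ((n:ℝ) - 1)⁻¹ *
          ((∑ i ∈ Finset.range n, X i ω j * X i ω l) -
            (n:ℝ) * ((n:ℝ)⁻¹ * ∑ i ∈ Finset.range n, X i ω j) *
              ((n:ℝ)⁻¹ * ∑ i ∈ Finset.range n, X i ω l)) := by
        simp only [sampleSXX, Matrix.smul_apply, Matrix.sum_apply, vecMulVec_apply,
          Pi.sub_apply, sampleXbar_apply, smul_eq_mul]
        rw [centered_sum]
      rw [key, sampleXbar_apply, sampleXbar_apply, mul_assoc]
      congr 1
      rw [mul_sub, mul_inv_cancel_left₀ hn0]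
      ring
    simpa using base.congr' ev
  have hSXX : Tendsto (fun n => sampleSXX X n ω) atTop (𝓝 SigXX) :=
    tendsto_pi_nhds.2 fun j => tendsto_pi_nhds.2 fun l => hSXXjl j l
  -- S_XY convergence
  have hSXYj : ∀ j, Tendsto (fun n => sampleSXY X Y n ω j) atTop (𝓝 (SigXY j)) := by
    intro j
    have base : Tendsto (fun n : ℕ => (((n:ℝ) - 1)⁻¹ * n) *
        (((n:ℝ)⁻¹ * ∑ i ∈ Finset.range n, Y i ω * X i ω j) -
          sampleYbar Y n ω * sampleXbar X n ω j)) atTop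
        (𝓝 (1 * ((SigXY j + μY * μX j) - μY * μX j))) :=
      tendsto_ratio.mul ((hxy j).sub (hYbar'.mul (hXbar' j)))
    have ev : ∀ᶠ n : ℕ in atTop, (((n:ℝ) - 1)⁻¹ * n) *
        (((n:ℝ)⁻¹ * ∑ i ∈ Finset.range n, Y i ω * X i ω j) -
          sampleYbar Y n ω * sampleXbar X n ω j) = sampleSXY X Y n ω j := by
      filter_upwards [eventually_ge_atTop 1] with n hn
      have hn0 : (n:ℝ) ≠ 0 := by positivity
      have key : sampleSXY X Y n ω j = ((n:ℝ) - 1)⁻¹ *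
          ((∑ i ∈ Finset.range n, Y i ω * X i ω j) -
            (n:ℝ) * ((n:ℝ)⁻¹ * ∑ i ∈ Finset.range n, Y i ω) *
              ((n:ℝ)⁻¹ * ∑ i ∈ Finset.range n, X i ω j)) := by
        simp only [sampleSXY, Pi.smul_apply, Finset.sum_apply, Pi.sub_apply,
          sampleXbar_apply, sampleYbar, smul_eq_mul]
        rw [centered_sum]
      rw [key, sampleXbar_apply, sampleYbar, mul_assoc]
      congr 1
      rw [mul_sub, mul_inv_cancel_left₀ hn0]
      ring
    simpa using base.congr' ev
  have hSXY : Tendsto (fun n => sampleSXY X Y n ω) atTop (𝓝 SigXY) :=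
    tendsto_pi_nhds.2 hSXYj
  -- S_Y² convergence
  have hSY2 : Tendsto (fun n => sampleSY2 Y n ω) atTop (𝓝 vY) := by
    have base : Tendsto (fun n : ℕ => (((n:ℝ) - 1)⁻¹ * n) *
        (((n:ℝ)⁻¹ * ∑ i ∈ Finset.range n, Y i ω * Y i ω) -
          sampleYbar Y n ω * sampleYbar Y n ω)) atTop
        (𝓝 (1 * ((vY + μY * μY) - μY * μY))) :=
      tendsto_ratio.mul (hyy.sub (hYbar'.mul hYbar'))
    have ev : ∀ᶠ n : ℕ in atTop, (((n:ℝ) - 1)⁻¹ * n) *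
        (((n:ℝ)⁻¹ * ∑ i ∈ Finset.range n, Y i ω * Y i ω) -
          sampleYbar Y n ω * sampleYbar Y n ω) = sampleSY2 Y n ω := by
      filter_upwards [eventually_ge_atTop 1] with n hn
      have hn0 : (n:ℝ) ≠ 0 := by positivity
      have key : sampleSY2 Y n ω = ((n:ℝ) - 1)⁻¹ *
          ((∑ i ∈ Finset.range n, Y i ω * Y i ω) -
            (n:ℝ) * ((n:ℝ)⁻¹ * ∑ i ∈ Finset.range n, Y i ω) *
              ((n:ℝ)⁻¹ * ∑ i ∈ Finset.range n, Y i ω)) := by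
        simp only [sampleSY2, sampleYbar, pow_two]
        rw [centered_sum]
      rw [key, sampleYbar, mul_assoc]
      congr 1
      rw [mul_sub, mul_inv_cancel_left₀ hn0]
      ring
    simpa using base.congr' ev
  -- inverse matrix convergence
  have hInv : Tendsto (fun n => (sampleSXX X n ω)⁻¹) atTop (𝓝 SigXX⁻¹) := by
    have hc : ContinuousAt Inv.inv SigXX :=
      continuousAt_matrix_inv SigXX (by rw [Ring.inverse_eq_inv']; exact continuousAt_inv₀ hdet)
    exact hc.tendsto.comp hSXX
  have hmv : Tendsto (fun n => (sampleSXX X n ω)⁻¹ *ᵥ sampleSXY X Y n ω) atTop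
      (𝓝 (SigXX⁻¹ *ᵥ SigXY)) := by
    refine tendsto_pi_nhds.2 fun j => ?_
    simp only [Matrix.mulVec, dotProduct]
    exact tendsto_finset_sum _ fun l _ =>
      (tendsto_pi_nhds.1 (tendsto_pi_nhds.1 hInv j) l).mul (tendsto_pi_nhds.1 hSXY l)
  have hqhat : Tendsto (fun n => sampleSXY X Y n ω ⬝ᵥ ((sampleSXX X n ω)⁻¹ *ᵥ sampleSXY X Y n ω))
      atTop (𝓝 (SigXY ⬝ᵥ (SigXX⁻¹ *ᵥ SigXY))) := by
    simp only [dotProduct]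
    exact tendsto_finset_sum _ fun l _ =>
      (tendsto_pi_nhds.1 hSXY l).mul (tendsto_pi_nhds.1 hmv l)
  have hγ : Tendsto (fun n => sampleGamma X Y n ω) atTop
      (𝓝 (Real.sqrt (SigXY ⬝ᵥ (SigXX⁻¹ *ᵥ SigXY)) / Real.sqrt vY)) := by
    simp only [sampleGamma]
    exact Tendsto.div ((Real.continuous_sqrt.tendsto _).comp hqhat)
      ((Real.continuous_sqrt.tendsto _).comp hSY2) (Real.sqrt_pos.2 hvY).ne'
  have hγpos : 0 < Real.sqrt (SigXY ⬝ᵥ (SigXX⁻¹ *ᵥ SigXY)) / Real.sqrt vY :=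
    div_pos (Real.sqrt_pos.2 hq) (Real.sqrt_pos.2 hvY)
  have hγinv : Tendsto (fun n => (sampleGamma X Y n ω)⁻¹) atTop
      (𝓝 (Real.sqrt (SigXY ⬝ᵥ (SigXX⁻¹ *ᵥ SigXY)) / Real.sqrt vY)⁻¹) :=
    hγ.inv₀ hγpos.ne'
  -- final assembly
  have final : Tendsto (fun n => sampleYbar Y n ω + ∑ j, (x₀ j - sampleXbar X n ω j) *
      ((sampleGamma X Y n ω)⁻¹ * ((sampleSXX X n ω)⁻¹ *ᵥ sampleSXY X Y n ω) j)) atTop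
      (𝓝 (μY + ∑ j, (x₀ j - μX j) *
        ((Real.sqrt (SigXY ⬝ᵥ (SigXX⁻¹ *ᵥ SigXY)) / Real.sqrt vY)⁻¹ *
          (SigXX⁻¹ *ᵥ SigXY) j))) := by
    refine hYbar'.add (tendsto_finset_sum _ fun j _ => ?_)
    exact (tendsto_const_nhds.sub (hXbar' j)).mul (hγinv.mul (tendsto_pi_nhds.1 hmv j))
  have eq1 : ∀ n, sampleYbar Y n ω + ∑ j, (x₀ j - sampleXbar X n ω j) *
      ((sampleGamma X Y n ω)⁻¹ * ((sampleSXX X n ω)⁻¹ *ᵥ sampleSXY X Y n ω) j)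
      = malpHat X Y n x₀ ω := by
    intro n
    simp [malpHat, dotProduct, Pi.sub_apply, Pi.smul_apply, smul_eq_mul]
  have final' := final.congr eq1
  simpa [dotProduct, Pi.sub_apply, Pi.smul_apply, smul_eq_mul] using final'

lemma measurable_malpHat {Ω : Type*} [MeasurableSpace Ω] {p : ℕ}
    (X : ℕ → Ω → Fin p → ℝ) (Y : ℕ → Ω → ℝ)
    (hXm : ∀ i, Measurable (X i)) (hYm : ∀ i, Measurable (Y i)) (n : ℕ) (x₀ : Fin p → ℝ) :
    Measurable (fun ω => malpHat X Y n x₀ ω) := by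
  have hXj : ∀ i j, Measurable fun ω => X i ω j := fun i j =>
    (measurable_pi_apply j).comp (hXm i)
  have hxb : ∀ j, Measurable fun ω => sampleXbar X n ω j := fun j => by
    simp only [sampleXbar_apply]
    exact (Finset.measurable_sum _ fun i _ => hXj i j).const_mul _
  have hyb : Measurable fun ω => sampleYbar Y n ω := by
    unfold sampleYbar
    exact (Finset.measurable_sum _ fun i _ => hYm i).const_mul _
  have hSXXjl : ∀ j l, Measurable fun ω => sampleSXX X n ω j l := by
    intro j l
    simp only [sampleSXX, Matrix.smul_apply, Matrix.sum_apply, vecMulVec_apply,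
      Pi.sub_apply, smul_eq_mul]
    exact (Finset.measurable_sum _ fun i _ =>
      ((hXj i j).sub (hxb j)).mul ((hXj i l).sub (hxb l))).const_mul _
  have hSXY : ∀ j, Measurable fun ω => sampleSXY X Y n ω j := fun j => by
    simp only [sampleSXY, Pi.smul_apply, Finset.sum_apply, Pi.sub_apply, smul_eq_mul]
    exact (Finset.measurable_sum _ fun i _ =>
      ((hYm i).sub hyb).mul ((hXj i j).sub (hxb j))).const_mul _
  have hSY2 : Measurable fun ω => sampleSY2 Y n ω := by
    unfold sampleSY2
    exact (Finset.measurable_sum _ fun i _ => ((hYm i).sub hyb).pow_const 2).const_mul _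
  have hdet0 : ∀ (M : Ω → Matrix (Fin p) (Fin p) ℝ), (∀ j l, Measurable fun ω => M ω j l) →
      Measurable fun ω => (M ω).det := by
    intro M h
    simp only [Matrix.det_apply]
    refine Finset.measurable_sum _ fun σ _ => ?_
    simp only [Units.smul_def, zsmul_eq_mul]
    exact (Finset.measurable_prod _ fun i _ => h (σ i) i).const_mul _
  have hdetm : Measurable fun ω => (sampleSXX X n ω).det := hdet0 _ hSXXjl
  have hadj : ∀ j l, Measurable fun ω => (sampleSXX X n ω).adjugate j l := by
    intro j l
    simp only [Matrix.adjugate_apply]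
    refine hdet0 _ ?_
    intro a b
    simp only [Matrix.updateRow_apply]
    rcases eq_or_ne a l with hab | hab
    · simpa [hab] using (measurable_const : Measurable fun _ : Ω => (Pi.single j (1:ℝ)) b)
    · simpa [hab] using hSXXjl a b
  have hInvjl : ∀ j l, Measurable fun ω => (sampleSXX X n ω)⁻¹ j l := by
    intro j l
    have e : (fun ω => (sampleSXX X n ω)⁻¹ j l)
        = fun ω => ((sampleSXX X n ω).det)⁻¹ * (sampleSXX X n ω).adjugate j l := by
      funext ω
      rw [Matrix.inv_def, Ring.inverse_eq_inv', Matrix.smul_apply, smul_eq_mul]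
    rw [e]
    exact hdetm.inv.mul (hadj j l)
  have hmvj : ∀ j, Measurable fun ω => ((sampleSXX X n ω)⁻¹ *ᵥ sampleSXY X Y n ω) j := fun j => by
    simp only [Matrix.mulVec, dotProduct]
    exact Finset.measurable_sum _ fun l _ => (hInvjl j l).mul (hSXY l)
  have hq : Measurable fun ω =>
      sampleSXY X Y n ω ⬝ᵥ ((sampleSXX X n ω)⁻¹ *ᵥ sampleSXY X Y n ω) := by
    simp only [dotProduct]
    exact Finset.measurable_sum _ fun l _ => (hSXY l).mul (hmvj l)
  have hγ : Measurable fun ω => sampleGamma X Y n ω := by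
    unfold sampleGamma
    exact (Real.continuous_sqrt.measurable.comp hq).div
      (Real.continuous_sqrt.measurable.comp hSY2)
  unfold malpHat
  simp only [dotProduct, Pi.sub_apply, Pi.smul_apply, smul_eq_mul]
  exact hyb.add (Finset.measurable_sum _ fun j _ =>
    (measurable_const.sub (hxb j)).mul (hγ.inv.mul (hmvj j)))

lemma pCov_comm {Ω : Type*} [MeasureSpace Ω] (U V : Ω → ℝ) : pCov U V = pCov V U := by
  unfold pCov
  exact integral_congr_ae (Filter.Eventually.of_forall fun ω => mul_comm _ _)

end Aux

/-- For i.i.d. data with finite fourth moments, positive definite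
`Σ_XX`, `Σ_XY ≠ 0` and `Var Y > 0`, the estimated MALP at a fixed point `x₀` converges
in probability to the true MALP `Ỹ*(x₀) = μ_Y + (x₀−μ_X)·(1/γ)Σ_XX⁻¹Σ_XY`. -/

theorem malpHat_tendstoInMeasure {Ω : Type*} [MeasureSpace Ω]
    [IsProbabilityMeasure (ℙ : Measure Ω)] {p : ℕ} (hp : 0 < p)
    (X : ℕ → Ω → Fin p → ℝ) (Y : ℕ → Ω → ℝ)
    (hXm : ∀ i, Measurable (X i)) (hYm : ∀ i, Measurable (Y i))
    (hindep : iIndepFun (fun i ω => (X i ω, Y i ω)) ℙ)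
    (hid : ∀ i, Measure.map (fun ω => (X i ω, Y i ω)) ℙ
      = Measure.map (fun ω => (X 0 ω, Y 0 ω)) ℙ)
    (hX4 : ∀ j, MemLp (fun ω => X 0 ω j) 4 ℙ) (hY4 : MemLp (Y 0) 4 ℙ)
    (μX : Fin p → ℝ) (hμX : μX = fun j => pMean (fun ω => X 0 ω j))
    (μY : ℝ) (hμY : μY = pMean (Y 0))
    (SigXX : Matrix (Fin p) (Fin p) ℝ)
    (hSigXX : SigXX = Matrix.of fun j l => pCov (fun ω => X 0 ω j) (fun ω => X 0 ω l))
    (hPD : SigXX.PosDef)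
    (SigXY : Fin p → ℝ) (hSigXY : SigXY = fun j => pCov (fun ω => X 0 ω j) (Y 0))
    (hne : SigXY ≠ 0)
    (hvar : 0 < pVar (Y 0))
    (γ : ℝ) (hγ : γ = Real.sqrt (SigXY ⬝ᵥ (SigXX⁻¹ *ᵥ SigXY)) / Real.sqrt (pVar (Y 0)))
    (x₀ : Fin p → ℝ) :
    TendstoInMeasure ℙ (fun n ω => malpHat X Y n x₀ ω) atTop
      (fun _ => μY + (x₀ - μX) ⬝ᵥ (γ⁻¹ • (SigXX⁻¹ *ᵥ SigXY))) := by
  have hX2 : ∀ j, MemLp (fun ω => X 0 ω j) 2 ℙ :=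
    fun j => (hX4 j).mono_exponent (by norm_num)
  have hY2 : MemLp (Y 0) 2 ℙ := hY4.mono_exponent (by norm_num)
  have hdet : SigXX.det ≠ 0 := hPD.det_pos.ne'
  have hq0 : 0 < SigXY ⬝ᵥ (SigXX⁻¹ *ᵥ SigXY) := by
    have h := hPD.inv.dotProduct_mulVec_pos hne
    simpa using h
  have eX : ∀ j, (∫ ω, X 0 ω j) = μX j := fun j => by rw [hμX]; rfl
  have eY : (∫ ω, Y 0 ω) = μY := by rw [hμY]; rfl
  have eXX : ∀ j l, (∫ ω, X 0 ω j * X 0 ω l) = SigXX j l + μX j * μX l := fun j l => by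
    rw [pCov_eq (hX2 j) (hX2 l), hSigXX, hμX]
    rfl
  have eXY : ∀ j, (∫ ω, Y 0 ω * X 0 ω j) = SigXY j + μY * μX j := fun j => by
    rw [pCov_eq hY2 (hX2 j), pCov_comm, hSigXY, hμX, hμY]
  have eYY : (∫ ω, Y 0 ω * Y 0 ω) = pVar (Y 0) + μY * μY := by
    rw [pCov_eq hY2 hY2, hμY]
    rfl
  have h1 : ∀ᵐ ω, ∀ j, Tendsto (fun n : ℕ => (n:ℝ)⁻¹ * ∑ i ∈ Finset.range n, X i ω j)
      atTop (𝓝 (μX j)) := by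
    rw [ae_all_iff]
    intro j
    have := slln_comp X Y hXm hYm hindep hid (fun z => z.1 j)
      ((measurable_pi_apply j).comp measurable_fst) ((hX4 j).integrable (by norm_num))
    simpa [eX j] using this
  have h2 : ∀ᵐ ω, Tendsto (fun n : ℕ => (n:ℝ)⁻¹ * ∑ i ∈ Finset.range n, Y i ω)
      atTop (𝓝 μY) := by
    have := slln_comp X Y hXm hYm hindep hid (fun z => z.2) measurable_snd
      (hY4.integrable (by norm_num))
    simpa [eY] using this
  have h3 : ∀ᵐ ω, ∀ j l, Tendsto (fun n : ℕ => (n:ℝ)⁻¹ * ∑ i ∈ Finset.range n,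
      X i ω j * X i ω l) atTop (𝓝 (SigXX j l + μX j * μX l)) := by
    rw [ae_all_iff]
    intro j
    rw [ae_all_iff]
    intro l
    have := slln_comp X Y hXm hYm hindep hid (fun z => z.1 j * z.1 l)
      (((measurable_pi_apply j).comp measurable_fst).mul
        ((measurable_pi_apply l).comp measurable_fst))
      (mul_int' (hX2 j) (hX2 l))
    simpa [eXX j l] using this
  have h4 : ∀ᵐ ω, ∀ j, Tendsto (fun n : ℕ => (n:ℝ)⁻¹ * ∑ i ∈ Finset.range n,
      Y i ω * X i ω j) atTop (𝓝 (SigXY j + μY * μX j)) := by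
    rw [ae_all_iff]
    intro j
    have := slln_comp X Y hXm hYm hindep hid (fun z => z.2 * z.1 j)
      (measurable_snd.mul ((measurable_pi_apply j).comp measurable_fst))
      (mul_int' hY2 (hX2 j))
    simpa [eXY j] using this
  have h5 : ∀ᵐ ω, Tendsto (fun n : ℕ => (n:ℝ)⁻¹ * ∑ i ∈ Finset.range n, Y i ω * Y i ω)
      atTop (𝓝 (pVar (Y 0) + μY * μY)) := by
    have := slln_comp X Y hXm hYm hindep hid (fun z => z.2 * z.2)
      (measurable_snd.mul measurable_snd) (mul_int' hY2 hY2)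
    simpa [eYY] using this
  have hae : ∀ᵐ ω, Tendsto (fun n => malpHat X Y n x₀ ω) atTop
      (𝓝 (μY + (x₀ - μX) ⬝ᵥ (γ⁻¹ • (SigXX⁻¹ *ᵥ SigXY)))) := by
    filter_upwards [h1, h2, h3, h4, h5] with ω H1 H2 H3 H4 H5
    have := tendsto_malpHat_det X Y ω μX μY SigXX SigXY (pVar (Y 0)) hdet hq0 hvar x₀
      H1 H2 H3 H4 H5
    rwa [← hγ] at this
  exact tendstoInMeasure_of_tendsto_ae
    (fun n => (measurable_malpHat X Y hXm hYm n x₀).aestronglyMeasurable) hae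
end

section
/- Let X be a p-dimensional random row vector and Y a square-integrable real random variable with positive variance, with Σ_XX positive definite and Σ_XY ≠ 0, γ = √(Σ_YX Σ_XX⁻¹ Σ_XY)/σ_Y, and let Ỹ*(x) = μ_Y + (x−μ_X)·(1/γ)Σ_XX⁻¹Σ_XY be the maximum agreement linear predictor. Then the Pearson correlation coefficient between Y and Ỹ*(X) equals γ, and hence CCC(Y, Ỹ*(X)) = ρ(Y, Ỹ*(X)) = γ. -/
open MeasureTheory ProbabilityTheory Matrix

/-- Lin's concordance correlation coefficient. -/
noncomputable def CCC {Ω : Type*} [MeasureSpace Ω] (U V : Ω → ℝ) : ℝ :=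
  2 * pCov U V / (pVar U + pVar V + (pMean U - pMean V) ^ 2)

/-- Pearson correlation coefficient of two real random variables. -/
noncomputable def pPCC {Ω : Type*} [MeasureSpace Ω] (U V : Ω → ℝ) : ℝ :=
  pCov U V / (Real.sqrt (pVar U) * Real.sqrt (pVar V))

lemma l2_mul_integrable {Ω : Type*} [MeasureSpace Ω] [IsProbabilityMeasure (ℙ : Measure Ω)]
    {f g : Ω → ℝ} (hf : MemLp f 2 ℙ) (hg : MemLp g 2 ℙ) :
    Integrable (fun ω => f ω * g ω) := by
  rw [← memLp_one_iff_integrable]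
  have he : (1:ENNReal)/1 = 1/2 + 1/2 := by rw [ENNReal.add_halves]; simp
  have h := haveI : ENNReal.HolderTriple 2 2 1 := ⟨by simp [ENNReal.inv_two_add_inv_two]⟩; MemLp.smul (φ := f) (r := 1) hg hf
  simpa [smul_eq_mul, Pi.mul_def] using h

/-- The Pearson correlation between `Y` and the MALP
`Ỹ*(x) = μ_Y + (x−μ_X)·(1/γ)Σ_XX⁻¹Σ_XY` equals `γ`, and the concordance correlation
between `Y` and the MALP also equals `γ` (hence equals the Pearson correlation). -/
theorem malp_correlations_eq_gamma {Ω : Type*} [MeasureSpace Ω]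
    [IsProbabilityMeasure (ℙ : Measure Ω)] {p : ℕ} (hp : 0 < p)
    (X : Ω → Fin p → ℝ) (Y : Ω → ℝ)
    (hX : ∀ j, MemLp (fun ω => X ω j) 2 ℙ) (hY : MemLp Y 2 ℙ)
    (hvar : 0 < pVar Y)
    (μX : Fin p → ℝ) (hμX : μX = fun j => pMean (fun ω => X ω j))
    (μY : ℝ) (hμY : μY = pMean Y)
    (SigXX : Matrix (Fin p) (Fin p) ℝ)
    (hSigXX : SigXX = Matrix.of fun j l => pCov (fun ω => X ω j) (fun ω => X ω l))
    (hPD : SigXX.PosDef)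
    (SigXY : Fin p → ℝ) (hSigXY : SigXY = fun j => pCov (fun ω => X ω j) Y)
    (hne : SigXY ≠ 0)
    (γ : ℝ) (hγ : γ = Real.sqrt (SigXY ⬝ᵥ (SigXX⁻¹ *ᵥ SigXY)) / Real.sqrt (pVar Y)) :
    pPCC Y (fun ω => μY + (X ω - μX) ⬝ᵥ (γ⁻¹ • (SigXX⁻¹ *ᵥ SigXY))) = γ ∧
    CCC Y (fun ω => μY + (X ω - μX) ⬝ᵥ (γ⁻¹ • (SigXX⁻¹ *ᵥ SigXY))) = γ := by
  -- notation
  set b : Fin p → ℝ := SigXX⁻¹ *ᵥ SigXY with hb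
  set q : ℝ := SigXY ⬝ᵥ b with hq
  have hqpos : 0 < q := by
    have h := (hPD.inv).dotProduct_mulVec_pos hne
    simpa [hq, hb] using h
  have hγpos : 0 < γ := by
    rw [hγ]
    exact div_pos (Real.sqrt_pos.mpr hqpos) (Real.sqrt_pos.mpr hvar)
  have hγ2 : γ ^ 2 = q / pVar Y := by
    rw [hγ, div_pow, Real.sq_sqrt hqpos.le, Real.sq_sqrt hvar.le]
  have hSb : SigXX *ᵥ b = SigXY := by
    rw [hb, mulVec_mulVec, Matrix.mul_nonsing_inv _ (isUnit_iff_isUnit_det _ |>.mp hPD.isUnit),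
      one_mulVec]
  set c : Fin p → ℝ := γ⁻¹ • b with hc
  -- centered variables
  set Z : Fin p → Ω → ℝ := fun j ω => X ω j - μX j with hZdef
  set cY : Ω → ℝ := fun ω => Y ω - μY with hcYdef
  have hZ : ∀ j, MemLp (Z j) 2 ℙ := fun j => (hX j).sub (memLp_const _)
  have hcY : MemLp cY 2 ℙ := hY.sub (memLp_const _)
  have hZint : ∀ j, Integrable (Z j) := fun j => (hZ j).integrable one_le_two
  have hμXj : ∀ j, pMean (fun ω => X ω j) = μX j := fun j => (congrFun hμX j).symm
  have hZmean : ∀ j, ∫ ω, Z j ω = 0 := by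
    intro j
    have h1 : Integrable (fun ω => X ω j) := (hX j).integrable one_le_two
    rw [hZdef]
    rw [integral_sub h1 (integrable_const _), integral_const]
    have : (∫ ω, X ω j) = μX j := hμXj j
    simp [this]
  -- the predictor
  set W : Ω → ℝ := fun ω => μY + (X ω - μX) ⬝ᵥ c with hW
  have hWe : ∀ ω, W ω = μY + ∑ j, Z j ω * c j := by
    intro ω
    rw [hW]
    simp [dotProduct, hZdef]
  have hWsum_int : Integrable (fun ω => ∑ j, Z j ω * c j) :=
    integrable_finset_sum _ fun j _ => (hZint j).mul_const _
  have hWmean : pMean W = μY := by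
    unfold pMean
    simp_rw [hWe]
    rw [integral_add (integrable_const _) hWsum_int, integral_const,
      integral_finset_sum _ fun j _ => (hZint j).mul_const _]
    simp [integral_mul_const, hZmean]
  -- covariance of Y and W
  have hcXY : ∀ j, (∫ ω, cY ω * Z j ω) = SigXY j := by
    intro j
    have : SigXY j = pCov (fun ω => X ω j) Y := by rw [hSigXY]
    rw [this]
    unfold pCov
    rw [hμXj j, ← hμY]
    simp_rw [hcYdef, hZdef, mul_comm]
  have hcov : pCov Y W = γ⁻¹ * q := by
    unfold pCov
    rw [hWmean, ← hμY]
    have heq : ∀ ω, (Y ω - μY) * (W ω - μY) = ∑ j, (cY ω * Z j ω) * c j := by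
      intro ω
      rw [hWe]
      simp only [add_sub_cancel_left, hcYdef]
      rw [Finset.mul_sum]
      exact Finset.sum_congr rfl fun j _ => by ring
    simp_rw [heq]
    rw [integral_finset_sum _ fun j _ =>
      (l2_mul_integrable hcY (hZ j)).mul_const _]
    simp_rw [integral_mul_const]
    have : ∀ j ∈ Finset.univ, (∫ ω, cY ω * Z j ω) * c j = SigXY j * c j :=
      fun j _ => by rw [hcXY j]
    rw [Finset.sum_congr rfl this]
    have : SigXY ⬝ᵥ c = γ⁻¹ * q := by
      rw [hc, dotProduct_smul, hq, smul_eq_mul]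
    rw [← this]
    rfl
  -- variance of W
  have hXXjl : ∀ j l, (∫ ω, Z j ω * Z l ω) = SigXX j l := by
    intro j l
    have : SigXX j l = pCov (fun ω => X ω j) (fun ω => X ω l) := by rw [hSigXX]; rfl
    rw [this]
    unfold pCov
    rw [hμXj j, hμXj l]
  have hvarW : pVar W = pVar Y := by
    have hvW : pVar W = c ⬝ᵥ (SigXX *ᵥ c) := by
      unfold pVar pCov
      rw [hWmean]
      have heq : ∀ ω, (W ω - μY) * (W ω - μY)
          = ∑ j, ∑ l, (Z j ω * Z l ω) * (c j * c l) := by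
        intro ω
        rw [hWe]
        simp only [add_sub_cancel_left]
        rw [Finset.sum_mul_sum]
        exact Finset.sum_congr rfl fun j _ => Finset.sum_congr rfl fun l _ => by ring
      simp_rw [heq]
      rw [integral_finset_sum _ fun j _ => integrable_finset_sum _ fun l _ =>
        (l2_mul_integrable (hZ j) (hZ l)).mul_const _]
      have : ∀ j, (∫ ω, ∑ l, (Z j ω * Z l ω) * (c j * c l))
          = ∑ l, SigXX j l * (c j * c l) := by
        intro j
        rw [integral_finset_sum _ fun l _ => (l2_mul_integrable (hZ j) (hZ l)).mul_const _]
        exact Finset.sum_congr rfl fun l _ => by rw [integral_mul_const, hXXjl]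
      rw [Finset.sum_congr rfl fun j _ => this j]
      simp only [dotProduct, mulVec, Finset.mul_sum]
      exact Finset.sum_congr rfl fun j _ => Finset.sum_congr rfl fun l _ => by ring
    rw [hvW, hc, mulVec_smul, hSb, smul_dotProduct, dotProduct_smul, dotProduct_comm, ← hq,
      smul_eq_mul, smul_eq_mul]
    have hqeq : q = γ ^ 2 * pVar Y := by
      rw [hγ2]; field_simp
    rw [hqeq]
    field_simp
  -- final computation
  have hration : γ⁻¹ * q / pVar Y = γ := by
    have hqeq : q = γ ^ 2 * pVar Y := by rw [hγ2]; field_simp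
    rw [hqeq]
    field_simp
  constructor
  · unfold pPCC
    rw [hcov, hvarW, Real.mul_self_sqrt hvar.le]
    exact hration
  · unfold CCC
    rw [hcov, hvarW, hWmean, ← hμY, sub_self]
    rw [show pVar Y + pVar Y + (0:ℝ) ^ 2 = 2 * pVar Y by ring]
    rw [mul_div_mul_left _ _ (two_ne_zero)]
    exact hration
end

section
/- Let A : Ω → ℝ^p be a square-integrable random row vector with mean μ_A and covariance matrix Σ_A, B : Ω → ℝ a square-integrable random variable with mean μ_B and variance σ_B², and let c ∈ ℝ^p be the vector of covariances Cov(A_j, B). Let W : Ω → ℝ^p be a square-integrable random column vector independent of the pair (A, B). Then for every fixed x₀ ∈ ℝ^p (row vector), the random variable L = B + (x₀ − A)·W satisfies E[L] = μ_B + (x₀ − μ_A)·E[W] and Var[L] = (x₀ − μ_A)·Cov(W)·(x₀ − μ_A)ᵀ + σ_B² + tr(Σ_A·E[WWᵀ]) − 2·cᵀE[W], where Cov(W) = E[WWᵀ] − E[W]E[W]ᵀ. -/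
open MeasureTheory ProbabilityTheory Matrix

theorem aux_int_mul {Ω : Type*} [MeasureSpace Ω] {f g : Ω → ℝ}
    (hf : MemLp f 2 ℙ) (hg : MemLp g 2 ℙ) : Integrable (fun ω => f ω * g ω) ℙ := by
  have h : Integrable (fun ω => (f ω ^ 2 + g ω ^ 2) / 2) ℙ :=
    (hf.integrable_sq.add hg.integrable_sq).div_const 2
  refine h.mono' (hf.aestronglyMeasurable.mul hg.aestronglyMeasurable) ?_
  filter_upwards with ω
  rw [Real.norm_eq_abs, abs_mul]
  nlinarith [sq_nonneg (|f ω| - |g ω|), sq_abs (f ω), sq_abs (g ω), abs_nonneg (f ω), abs_nonneg (g ω)]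

theorem aux_lin {Ω : Type*} [MeasureSpace Ω] [IsProbabilityMeasure (ℙ : Measure Ω)]
    (f g h : Ω → ℝ) (a b c d : ℝ) (hf : Integrable f ℙ) (hg : Integrable g ℙ)
    (hh : Integrable h ℙ) :
    ∫ ω, (a * f ω + b * g ω + c * h ω + d) =
      a * (∫ ω, f ω) + b * (∫ ω, g ω) + c * (∫ ω, h ω) + d := by
  have e1 : ∫ ω, (a * f ω + b * g ω + c * h ω + d)
      = (∫ ω, (a * f ω + b * g ω + c * h ω)) + ∫ (_ : Ω), d :=
    integral_add (((hf.const_mul a).add (hg.const_mul b)).add (hh.const_mul c))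
      (integrable_const d)
  have e2 : ∫ ω, (a * f ω + b * g ω + c * h ω)
      = (∫ ω, (a * f ω + b * g ω)) + ∫ ω, c * h ω :=
    integral_add ((hf.const_mul a).add (hg.const_mul b)) (hh.const_mul c)
  have e3 : ∫ ω, (a * f ω + b * g ω) = (∫ ω, a * f ω) + ∫ ω, b * g ω :=
    integral_add (hf.const_mul a) (hg.const_mul b)
  rw [e1, e2, e3, integral_const_mul, integral_const_mul, integral_const_mul, integral_const]
  simp

/-- Mean–variance decomposition for `L = B + (x₀ − A)·W` when the
random slope `W` is independent of the pair `(A, B)`: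
`E[L] = μ_B + (x₀−μ_A)·E[W]` and
`Var[L] = (x₀−μ_A)·Cov(W)·(x₀−μ_A)ᵀ + σ_B² + tr(Σ_A E[WWᵀ]) − 2 cᵀE[W]`. -/
theorem mean_variance_of_random_linear_predictor {Ω : Type*} [MeasureSpace Ω]
    [IsProbabilityMeasure (ℙ : Measure Ω)] {p : ℕ} (hp : 0 < p)
    (A : Ω → Fin p → ℝ) (B : Ω → ℝ) (W : Ω → Fin p → ℝ)
    (hA : ∀ j, MemLp (fun ω => A ω j) 2 ℙ) (hB : MemLp B 2 ℙ)
    (hW : ∀ j, MemLp (fun ω => W ω j) 2 ℙ)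
    (hindep : IndepFun (fun ω => (A ω, B ω)) W ℙ)
    (μA : Fin p → ℝ) (hμA : μA = fun j => pMean (fun ω => A ω j))
    (μB : ℝ) (hμB : μB = pMean B)
    (SigA : Matrix (Fin p) (Fin p) ℝ)
    (hSigA : SigA = Matrix.of fun j l => pCov (fun ω => A ω j) (fun ω => A ω l))
    (c : Fin p → ℝ) (hc : c = fun j => pCov (fun ω => A ω j) B)
    (EW : Fin p → ℝ) (hEW : EW = fun j => pMean (fun ω => W ω j))
    (EWWT : Matrix (Fin p) (Fin p) ℝ)
    (hEWWT : EWWT = Matrix.of fun j l => pMean (fun ω => W ω j * W ω l))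
    (CovW : Matrix (Fin p) (Fin p) ℝ) (hCovW : CovW = EWWT - vecMulVec EW EW)
    (x₀ : Fin p → ℝ) :
    pMean (fun ω => B ω + (x₀ - A ω) ⬝ᵥ W ω) = μB + (x₀ - μA) ⬝ᵥ EW ∧
    pVar (fun ω => B ω + (x₀ - A ω) ⬝ᵥ W ω)
      = (x₀ - μA) ⬝ᵥ (CovW *ᵥ (x₀ - μA)) + pVar B
        + Matrix.trace (SigA * EWWT) - 2 * (c ⬝ᵥ EW) := by
  -- basic integrability
  have hBi : Integrable B ℙ := hB.integrable one_le_two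
  have hAi : ∀ j, Integrable (fun ω => A ω j) ℙ := fun j => (hA j).integrable one_le_two
  have hWi : ∀ j, Integrable (fun ω => W ω j) ℙ := fun j => (hW j).integrable one_le_two
  have hYm : ∀ j, MemLp (fun ω => x₀ j - A ω j) 2 ℙ := fun j => (memLp_const (x₀ j)).sub (hA j)
  have hB'm : MemLp (fun ω => B ω - μB) 2 ℙ := hB.sub (memLp_const μB)
  have hB'i : Integrable (fun ω => B ω - μB) ℙ := hB'm.integrable one_le_two
  have hAc : ∀ j, MemLp (fun ω => A ω j - μA j) 2 ℙ := fun j => (hA j).sub (memLp_const _)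
  -- mean values
  have hμA' : ∀ j, ∫ ω, A ω j = μA j := fun j => by rw [hμA]; rfl
  have hμB' : ∫ ω, B ω = μB := by rw [hμB]; rfl
  have hEW' : ∀ j, ∫ ω, W ω j = EW j := fun j => by rw [hEW]; rfl
  have hEWWT' : ∀ j l, ∫ ω, W ω j * W ω l = EWWT j l := fun j l => by rw [hEWWT]; rfl
  have hpmA : ∀ j, pMean (fun ω => A ω j) = μA j := fun j => by rw [hμA]
  have hpmB : pMean B = μB := hμB.symm
  have hmY : ∀ j, ∫ ω, (x₀ j - A ω j) = x₀ j - μA j := by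
    intro j
    rw [integral_sub (integrable_const _) (hAi j), integral_const, hμA' j]
    simp
  have hB'0 : ∫ ω, (B ω - μB) = 0 := by
    rw [integral_sub hBi (integrable_const _), integral_const, hμB']
    simp
  have hA0 : ∀ j, ∫ ω, (A ω j - μA j) = 0 := by
    intro j
    rw [integral_sub (hAi j) (integrable_const _), integral_const, hμA' j]
    simp
  have hcj : ∀ j, c j = ∫ ω, (A ω j - μA j) * (B ω - μB) := by
    intro j; rw [hc]
    simp only [pCov, hpmA, hpmB]
  have hSigj : ∀ j l, SigA j l = ∫ ω, (A ω j - μA j) * (A ω l - μA l) := by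
    intro j l; rw [hSigA]
    simp only [Matrix.of_apply, pCov, hpmA]
  have hCW : ∀ j l, CovW j l = EWWT j l - EW j * EW l := by
    intro j l; rw [hCovW]; simp [vecMulVec_apply]
  have hsym : ∀ j l, EWWT l j = EWWT j l := by
    intro j l; rw [hEWWT]
    simp only [Matrix.of_apply, pMean]
    congr 1; funext ω; ring
  -- independence factorization
  have key : ∀ (φ : (Fin p → ℝ) × ℝ → ℝ) (ψ : (Fin p → ℝ) → ℝ), Measurable φ → Measurable ψ →
      Integrable (fun ω => φ (A ω, B ω)) ℙ → Integrable (fun ω => ψ (W ω)) ℙ →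
      Integrable (fun ω => φ (A ω, B ω) * ψ (W ω)) ℙ ∧
      ∫ ω, φ (A ω, B ω) * ψ (W ω) = (∫ ω, φ (A ω, B ω)) * ∫ ω, ψ (W ω) := by
    intro φ ψ hφ hψ h1 h2
    have hi : IndepFun (fun ω => φ (A ω, B ω)) (fun ω => ψ (W ω)) ℙ := hindep.comp hφ hψ
    exact ⟨hi.integrable_mul h1 h2, hi.integral_fun_mul_eq_mul_integral h1.aestronglyMeasurable h2.aestronglyMeasurable⟩
  have hWWi : ∀ j l, Integrable (fun ω => W ω j * W ω l) ℙ := fun j l =>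
    aux_int_mul (hW j) (hW l)
  -- K1 : ∫ Y_j W_j
  have hK1 : ∀ j, Integrable (fun ω => (x₀ j - A ω j) * W ω j) ℙ ∧
      ∫ ω, (x₀ j - A ω j) * W ω j = (x₀ j - μA j) * EW j := by
    intro j
    obtain ⟨h1, h2⟩ := key (fun q => x₀ j - q.1 j) (fun w => w j)
      (measurable_const.sub ((measurable_pi_apply j).comp measurable_fst))
      (measurable_pi_apply j) ((hYm j).integrable one_le_two) (hWi j)
    exact ⟨h1, by rw [h2, hmY j, hEW' j]⟩
  -- K2 : ∫ (B' Y_j) W_j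
  have hK2 : ∀ j, Integrable (fun ω => ((B ω - μB) * (x₀ j - A ω j)) * W ω j) ℙ ∧
      ∫ ω, ((B ω - μB) * (x₀ j - A ω j)) * W ω j = (-(c j)) * EW j := by
    intro j
    obtain ⟨h1, h2⟩ := key (fun q => (q.2 - μB) * (x₀ j - q.1 j)) (fun w => w j)
      ((measurable_snd.sub measurable_const).mul
        (measurable_const.sub ((measurable_pi_apply j).comp measurable_fst)))
      (measurable_pi_apply j) (aux_int_mul hB'm (hYm j)) (hWi j)
    refine ⟨h1, ?_⟩
    have e : ∫ ω, (B ω - μB) * (x₀ j - A ω j)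
        = ∫ ω, ((-1 : ℝ) * ((A ω j - μA j) * (B ω - μB))
            + (x₀ j - μA j) * (B ω - μB) + 0 * (B ω - μB) + 0) :=
      integral_congr_ae (Filter.Eventually.of_forall fun ω => by ring)
    have e2 := aux_lin (fun ω => (A ω j - μA j) * (B ω - μB)) (fun ω => B ω - μB)
      (fun ω => B ω - μB) (-1) (x₀ j - μA j) 0 0
      (aux_int_mul (hAc j) hB'm) hB'i hB'i
    rw [h2, hEW' j, e, e2, ← hcj j, hB'0]
    ring
  -- K3 : ∫ (Y_j Y_l)(W_j W_l)
  have hK3 : ∀ j l, Integrable (fun ω => ((x₀ j - A ω j) * (x₀ l - A ω l)) * (W ω j * W ω l)) ℙ ∧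
      ∫ ω, ((x₀ j - A ω j) * (x₀ l - A ω l)) * (W ω j * W ω l)
        = (SigA j l + (x₀ j - μA j) * (x₀ l - μA l)) * EWWT j l := by
    intro j l
    obtain ⟨h1, h2⟩ := key (fun q => (x₀ j - q.1 j) * (x₀ l - q.1 l)) (fun w => w j * w l)
      ((measurable_const.sub ((measurable_pi_apply j).comp measurable_fst)).mul
        (measurable_const.sub ((measurable_pi_apply l).comp measurable_fst)))
      ((measurable_pi_apply j).mul (measurable_pi_apply l))
      (aux_int_mul (hYm j) (hYm l)) (hWWi j l)
    refine ⟨h1, ?_⟩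
    have e : ∫ ω, (x₀ j - A ω j) * (x₀ l - A ω l)
        = ∫ ω, ((1 : ℝ) * ((A ω j - μA j) * (A ω l - μA l))
            + (-(x₀ j - μA j)) * (A ω l - μA l) + (-(x₀ l - μA l)) * (A ω j - μA j)
            + (x₀ j - μA j) * (x₀ l - μA l)) :=
      integral_congr_ae (Filter.Eventually.of_forall fun ω => by ring)
    have e2 := aux_lin (fun ω => (A ω j - μA j) * (A ω l - μA l))
      (fun ω => A ω l - μA l) (fun ω => A ω j - μA j)
      1 (-(x₀ j - μA j)) (-(x₀ l - μA l)) ((x₀ j - μA j) * (x₀ l - μA l))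
      (aux_int_mul (hAc j) (hAc l)) ((hAc l).integrable one_le_two)
      ((hAc j).integrable one_le_two)
    rw [h2, hEWWT' j l, e, e2, ← hSigj j l, hA0 j, hA0 l]
    ring
  -- Part 1 : the mean
  have hML : pMean (fun ω => B ω + (x₀ - A ω) ⬝ᵥ W ω) = μB + (x₀ - μA) ⬝ᵥ EW := by
    have e0 : pMean (fun ω => B ω + (x₀ - A ω) ⬝ᵥ W ω)
        = ∫ ω, (B ω + ∑ j, (x₀ j - A ω j) * W ω j) := by
      simp only [pMean, dotProduct, Pi.sub_apply]
    have e1 : ∫ ω, (B ω + ∑ j, (x₀ j - A ω j) * W ω j)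
        = (∫ ω, B ω) + ∫ ω, ∑ j, (x₀ j - A ω j) * W ω j :=
      integral_add hBi (integrable_finset_sum _ fun j _ => (hK1 j).1)
    have e2 : ∫ ω, ∑ j, (x₀ j - A ω j) * W ω j = ∑ j, ∫ ω, (x₀ j - A ω j) * W ω j :=
      integral_finset_sum _ fun j _ => (hK1 j).1
    rw [e0, e1, e2, hμB']
    congr 1
    simp only [dotProduct, Pi.sub_apply]
    exact Finset.sum_congr rfl fun j _ => (hK1 j).2
  refine ⟨hML, ?_⟩
  -- Part 2 : the variance
  -- centered pointwise identity
  have hLpt : ∀ ω, (B ω + (x₀ - A ω) ⬝ᵥ W ω) - (μB + (x₀ - μA) ⬝ᵥ EW)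
      = (B ω - μB) + ∑ j, ((x₀ j - A ω j) * W ω j - (x₀ j - μA j) * EW j) := by
    intro ω
    simp only [dotProduct, Pi.sub_apply, Finset.sum_sub_distrib]
    ring
  -- integrability of pieces
  have hB2i : Integrable (fun ω => (B ω - μB) * (B ω - μB)) ℙ := aux_int_mul hB'm hB'm
  have hBZi : ∀ j, Integrable
      (fun ω => 2 * (B ω - μB) * ((x₀ j - A ω j) * W ω j - (x₀ j - μA j) * EW j)) ℙ := by
    intro j
    have h := (((hK2 j).1.sub ((hB'i).const_mul ((x₀ j - μA j) * EW j))).const_mul 2)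
    refine h.congr (Filter.Eventually.of_forall fun ω => ?_)
    simp only [Pi.sub_apply]
    ring
  have hZZi : ∀ j l, Integrable
      (fun ω => ((x₀ j - A ω j) * W ω j - (x₀ j - μA j) * EW j)
        * ((x₀ l - A ω l) * W ω l - (x₀ l - μA l) * EW l)) ℙ := by
    intro j l
    have h := ((((hK3 j l).1.sub ((hK1 l).1.const_mul ((x₀ j - μA j) * EW j))).sub
      ((hK1 j).1.const_mul ((x₀ l - μA l) * EW l))).add
      (integrable_const ((x₀ j - μA j) * EW j * ((x₀ l - μA l) * EW l))))
    refine h.congr (Filter.Eventually.of_forall fun ω => ?_)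
    simp only [Pi.sub_apply, Pi.add_apply]
    ring
  -- value of ∫ B' Z_j
  have hBZ : ∀ j, ∫ ω, 2 * (B ω - μB) * ((x₀ j - A ω j) * W ω j - (x₀ j - μA j) * EW j)
      = 2 * (-(c j * EW j)) := by
    intro j
    have e : ∫ ω, 2 * (B ω - μB) * ((x₀ j - A ω j) * W ω j - (x₀ j - μA j) * EW j)
        = ∫ ω, ((2 : ℝ) * (((B ω - μB) * (x₀ j - A ω j)) * W ω j)
            + (-(2 * ((x₀ j - μA j) * EW j))) * (B ω - μB) + 0 * (B ω - μB) + 0) :=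
      integral_congr_ae (Filter.Eventually.of_forall fun ω => by ring)
    have e2 := aux_lin (fun ω => ((B ω - μB) * (x₀ j - A ω j)) * W ω j)
      (fun ω => B ω - μB) (fun ω => B ω - μB)
      2 (-(2 * ((x₀ j - μA j) * EW j))) 0 0 (hK2 j).1 hB'i hB'i
    rw [e, e2, (hK2 j).2, hB'0]
    ring
  -- value of ∫ Z_j Z_l
  have hZZ : ∀ j l, ∫ ω, ((x₀ j - A ω j) * W ω j - (x₀ j - μA j) * EW j)
        * ((x₀ l - A ω l) * W ω l - (x₀ l - μA l) * EW l)
      = SigA j l * EWWT j l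
        + (x₀ j - μA j) * (x₀ l - μA l) * (EWWT j l - EW j * EW l) := by
    intro j l
    have e : ∫ ω, ((x₀ j - A ω j) * W ω j - (x₀ j - μA j) * EW j)
          * ((x₀ l - A ω l) * W ω l - (x₀ l - μA l) * EW l)
        = ∫ ω, ((1 : ℝ) * (((x₀ j - A ω j) * (x₀ l - A ω l)) * (W ω j * W ω l))
            + (-((x₀ j - μA j) * EW j)) * ((x₀ l - A ω l) * W ω l)
            + (-((x₀ l - μA l) * EW l)) * ((x₀ j - A ω j) * W ω j)
            + (x₀ j - μA j) * EW j * ((x₀ l - μA l) * EW l)) :=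
      integral_congr_ae (Filter.Eventually.of_forall fun ω => by ring)
    have e2 := aux_lin
      (fun ω => ((x₀ j - A ω j) * (x₀ l - A ω l)) * (W ω j * W ω l))
      (fun ω => (x₀ l - A ω l) * W ω l) (fun ω => (x₀ j - A ω j) * W ω j)
      1 (-((x₀ j - μA j) * EW j)) (-((x₀ l - μA l) * EW l))
      ((x₀ j - μA j) * EW j * ((x₀ l - μA l) * EW l))
      (hK3 j l).1 (hK1 l).1 (hK1 j).1
    rw [e, e2, (hK3 j l).2, (hK1 l).2, (hK1 j).2]
    ring
  -- expand the variance integral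
  have hVexp : pVar (fun ω => B ω + (x₀ - A ω) ⬝ᵥ W ω)
      = ∫ ω, ((B ω - μB) * (B ω - μB)
          + (∑ j, 2 * (B ω - μB) * ((x₀ j - A ω j) * W ω j - (x₀ j - μA j) * EW j))
          + ∑ j, ∑ l, ((x₀ j - A ω j) * W ω j - (x₀ j - μA j) * EW j)
              * ((x₀ l - A ω l) * W ω l - (x₀ l - μA l) * EW l)) := by
    show (∫ ω, ((B ω + (x₀ - A ω) ⬝ᵥ W ω) - pMean (fun ω => B ω + (x₀ - A ω) ⬝ᵥ W ω))
        * ((B ω + (x₀ - A ω) ⬝ᵥ W ω) - pMean (fun ω => B ω + (x₀ - A ω) ⬝ᵥ W ω))) = _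
    rw [hML]
    refine integral_congr_ae (Filter.Eventually.of_forall fun ω => ?_)
    dsimp only
    rw [hLpt ω]
    have hms : ∀ b : ℝ, (∑ j, (2 * b * ((x₀ j - A ω j) * W ω j - (x₀ j - μA j) * EW j)))
        = 2 * b * ∑ j, ((x₀ j - A ω j) * W ω j - (x₀ j - μA j) * EW j) := by
      intro b; rw [Finset.mul_sum]
    rw [hms (B ω - μB), ← Finset.sum_mul_sum]
    ring
  have hint2 : Integrable (fun ω => (B ω - μB) * (B ω - μB)
      + ∑ j, 2 * (B ω - μB) * ((x₀ j - A ω j) * W ω j - (x₀ j - μA j) * EW j)) ℙ :=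
    hB2i.add (integrable_finset_sum _ fun j _ => hBZi j)
  have hint3 : Integrable (fun ω => ∑ j, ∑ l,
      ((x₀ j - A ω j) * W ω j - (x₀ j - μA j) * EW j)
        * ((x₀ l - A ω l) * W ω l - (x₀ l - μA l) * EW l)) ℙ :=
    integrable_finset_sum _ fun j _ => integrable_finset_sum _ fun l _ => hZZi j l
  have hsplit : pVar (fun ω => B ω + (x₀ - A ω) ⬝ᵥ W ω)
      = (∫ ω, (B ω - μB) * (B ω - μB))
        + (∑ j, ∫ ω, 2 * (B ω - μB) * ((x₀ j - A ω j) * W ω j - (x₀ j - μA j) * EW j))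
        + ∑ j, ∑ l, ∫ ω, ((x₀ j - A ω j) * W ω j - (x₀ j - μA j) * EW j)
            * ((x₀ l - A ω l) * W ω l - (x₀ l - μA l) * EW l) := by
    rw [hVexp]
    rw [integral_add hint2 hint3, integral_add hB2i (integrable_finset_sum _ fun j _ => hBZi j),
      integral_finset_sum _ fun j _ => hBZi j,
      integral_finset_sum _ fun j _ => integrable_finset_sum _ fun l _ => hZZi j l]
    congr 1
    exact Finset.sum_congr rfl fun j _ => integral_finset_sum _ fun l _ => hZZi j l
  -- assemble
  have hvarB : pVar B = ∫ ω, (B ω - μB) * (B ω - μB) := by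
    simp only [pVar, pCov, hpmB]
  rw [hsplit, ← hvarB]
  have hE1 : (∑ j, ∑ l, SigA j l * EWWT j l) = Matrix.trace (SigA * EWWT) := by
    rw [Matrix.trace]
    simp only [Matrix.diag_apply, Matrix.mul_apply]
    exact Finset.sum_congr rfl fun j _ => Finset.sum_congr rfl fun l _ => by rw [hsym l j]
  have hE2 : (∑ j, ∑ l, (x₀ j - μA j) * (x₀ l - μA l) * (EWWT j l - EW j * EW l))
      = (x₀ - μA) ⬝ᵥ (CovW *ᵥ (x₀ - μA)) := by
    simp only [dotProduct, mulVec, Pi.sub_apply]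
    refine Finset.sum_congr rfl fun j _ => ?_
    rw [Finset.mul_sum]
    refine Finset.sum_congr rfl fun l _ => ?_
    rw [hCW j l]
    ring
  have hE3 : (∑ j, 2 * (-(c j * EW j))) = -(2 * (c ⬝ᵥ EW)) := by
    simp only [dotProduct, Finset.mul_sum]
    rw [← Finset.sum_neg_distrib]
    exact Finset.sum_congr rfl fun j _ => by ring
  calc pVar B
        + (∑ j, ∫ ω, 2 * (B ω - μB) * ((x₀ j - A ω j) * W ω j - (x₀ j - μA j) * EW j))
        + ∑ j, ∑ l, ∫ ω, ((x₀ j - A ω j) * W ω j - (x₀ j - μA j) * EW j)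
            * ((x₀ l - A ω l) * W ω l - (x₀ l - μA l) * EW l)
      = pVar B + (∑ j, 2 * (-(c j * EW j)))
        + ∑ j, ∑ l, (SigA j l * EWWT j l
            + (x₀ j - μA j) * (x₀ l - μA l) * (EWWT j l - EW j * EW l)) := by
        congr 1
        · congr 1
          exact Finset.sum_congr rfl fun j _ => hBZ j
        · exact Finset.sum_congr rfl fun j _ => Finset.sum_congr rfl fun l _ => hZZ j l
    _ = pVar B + (∑ j, 2 * (-(c j * EW j)))
        + ((∑ j, ∑ l, SigA j l * EWWT j l)
          + ∑ j, ∑ l, (x₀ j - μA j) * (x₀ l - μA l) * (EWWT j l - EW j * EW l)) := by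
        rw [← Finset.sum_add_distrib]
        congr 1
        exact Finset.sum_congr rfl fun j _ => by rw [Finset.sum_add_distrib]
    _ = (x₀ - μA) ⬝ᵥ (CovW *ᵥ (x₀ - μA)) + pVar B
        + Matrix.trace (SigA * EWWT) - 2 * (c ⬝ᵥ EW) := by
        rw [hE1, hE2, hE3]
        ring
end
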